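/- arXiv:1406.2811 — 2 statements merged into one kernel-verified Lean document; each statement's English description precedes it below -/
import Mathlib

section
/- Jump gain (saltation) formula for the linearization across a state-triggered jump: Let g : ℝ^n × ℝ → ℝ and Δ : ℝ^n × ℝ → ℝ^n be continuously differentiable. Let xᵃ, xᵖ : (−ε₀,ε₀) × [t₀,t₁] → ℝ^n be continuously differentiable jointly in (ε,t), with nominal trajectories αᵃ(t) = xᵃ(0,t), αᵖ(t) = xᵖ(0,t) and first variations z̄ᵃ(t) = (∂xᵃ/∂ε)(0,t), z̄ᵖ(t) = (∂xᵖ/∂ε)(0,t). Let ε ↦ τ_ε be continuously differentiable with τ₀ = τ, suppose g(xᵃ(ε,τ_ε), τ_ε) = 0 and xᵖ(ε,τ_ε) = xᵃ(ε,τ_ε) + Δ(xᵃ(ε,τ_ε), τ_ε) for all ε near 0, and suppose the transversality condition ġ⁻ := D₁g(αᵃ(τ),τ)·f⁻ + D₂g(αᵃ(τ),τ) ≠ 0 holds, where f⁻ := α̇ᵃ(τ). Then z̄ᵖ(τ) = z̄ᵃ(τ) + H z̄ᵃ(τ), where, with f⁺ := α̇ᵖ(τ), Δ̇⁻ := D₁Δ(αᵃ(τ),τ)·f⁻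 + D₂Δ(αᵃ(τ),τ), the jump gain matrix is H = ( (f⁺ − f⁻ − Δ̇⁻) / ġ⁻ ) D₁g(αᵃ(τ),τ) + D₁Δ(αᵃ(τ),τ). -/
open Set Topology

/-- Jump gain (saltation) formula for the linearization across a
state-triggered jump: `z̄ᵖ(τ) = z̄ᵃ(τ) + H z̄ᵃ(τ)` with
`H = ((f⁺ − f⁻ − Δ̇⁻)/ġ⁻) D₁g + D₁Δ`. Here `f⁻ = α̇ᵃ(τ)`, `f⁺ = α̇ᵖ(τ)`,
`z̄ᵃ(τ) = ∂xᵃ/∂ε (0,τ)`, `z̄ᵖ(τ) = ∂xᵖ/∂ε (0,τ)`, and `H` is realized as the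
continuous linear map `w ↦ ġ⁻⁻¹ • (D₁g w) • (f⁺ − f⁻ − Δ̇⁻) + D₁Δ w`. -/
theorem jump_gain_formula
    (n : ℕ) (g : (Fin n → ℝ) × ℝ → ℝ) (Δ : (Fin n → ℝ) × ℝ → Fin n → ℝ)
    (xa xp : ℝ × ℝ → Fin n → ℝ) (τ : ℝ) (T : ℝ → ℝ)
    (hg : ContDiff ℝ 1 g) (hΔ : ContDiff ℝ 1 Δ)
    (hxa : ContDiff ℝ 1 xa) (hxp : ContDiff ℝ 1 xp)
    (hT : ContDiffAt ℝ 1 T 0) (hT0 : T 0 = τ)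
    (hevent : ∀ᶠ ε in 𝓝 (0 : ℝ), g (xa (ε, T ε), T ε) = 0)
    (hreset : ∀ᶠ ε in 𝓝 (0 : ℝ),
      xp (ε, T ε) = xa (ε, T ε) + Δ (xa (ε, T ε), T ε))
    -- the nominal velocities before and after the event
    (fm fp : Fin n → ℝ)
    (hfm : fm = fderiv ℝ xa (0, τ) (0, 1))
    (hfp : fp = fderiv ℝ xp (0, τ) (0, 1))
    -- partial derivatives of the guard and the impulse map at (αᵃ(τ), τ)
    (D1g : (Fin n → ℝ) →L[ℝ] ℝ) (hD1g : D1g = fderiv ℝ (fun y => g (y, τ)) (xa (0, τ)))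
    (D2g : ℝ) (hD2g : D2g = deriv (fun s => g (xa (0, τ), s)) τ)
    (D1Δ : (Fin n → ℝ) →L[ℝ] (Fin n → ℝ))
    (hD1Δ : D1Δ = fderiv ℝ (fun y => Δ (y, τ)) (xa (0, τ)))
    (D2Δ : Fin n → ℝ) (hD2Δ : D2Δ = deriv (fun s => Δ (xa (0, τ), s)) τ)
    -- total time derivatives ġ⁻ and Δ̇⁻ along the nominal trajectory
    (gdot : ℝ) (hgdot : gdot = D1g fm + D2g)
    (Δdot : Fin n → ℝ) (hΔdot : Δdot = D1Δ fm + D2Δ)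
    -- transversality
    (htrans : gdot ≠ 0)
    -- the jump gain
    (H : (Fin n → ℝ) →L[ℝ] (Fin n → ℝ))
    (hH : H = gdot⁻¹ • D1g.smulRight (fp - fm - Δdot) + D1Δ) :
    fderiv ℝ xp (0, τ) (1, 0) =
      fderiv ℝ xa (0, τ) (1, 0) + H (fderiv ℝ xa (0, τ) (1, 0)) := by
  subst hT0
  have hxad : Differentiable ℝ xa := hxa.differentiable one_ne_zero
  have hxpd : Differentiable ℝ xp := hxp.differentiable one_ne_zero
  have hgd : Differentiable ℝ g := hg.differentiable one_ne_zero
  have hΔd : Differentiable ℝ Δ := hΔ.differentiable one_ne_zero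
  have hTd : DifferentiableAt ℝ T 0 := hT.differentiableAt one_ne_zero
  set T' := deriv T 0 with hT'
  set A := fderiv ℝ xa (0, T 0) with hA
  set P := fderiv ℝ xp (0, T 0) with hP
  set G := fderiv ℝ g (xa (0, T 0), T 0) with hG
  set DΔ := fderiv ℝ Δ (xa (0, T 0), T 0) with hDΔ
  -- derivative of ε ↦ (ε, T ε)
  have hφ : HasDerivAt (fun ε : ℝ => ((ε : ℝ), T ε)) (1, T') 0 :=
    (hasDerivAt_id 0).prodMk hTd.hasDerivAt
  have h1 : HasDerivAt (fun ε => xa (ε, T ε)) (A (1, T')) 0 :=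
    (hxad (0, T 0)).hasFDerivAt.comp_hasDerivAt 0 hφ
  have h1p : HasDerivAt (fun ε => xp (ε, T ε)) (P (1, T')) 0 :=
    (hxpd (0, T 0)).hasFDerivAt.comp_hasDerivAt 0 hφ
  have hφ2 : HasDerivAt (fun ε => (xa (ε, T ε), T ε)) ((A (1, T'), T')) 0 :=
    h1.prodMk hTd.hasDerivAt
  have hgc : HasDerivAt (fun ε => g (xa (ε, T ε), T ε)) (G (A (1, T'), T')) 0 :=
    (hgd (xa (0, T 0), T 0)).hasFDerivAt.comp_hasDerivAt 0 hφ2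
  have hΔc : HasDerivAt (fun ε => Δ (xa (ε, T ε), T ε)) (DΔ (A (1, T'), T')) 0 :=
    (hΔd (xa (0, T 0), T 0)).hasFDerivAt.comp_hasDerivAt 0 hφ2
  -- guard equation
  have hzero : HasDerivAt (fun ε => g (xa (ε, T ε), T ε)) 0 0 :=
    (hasDerivAt_const (0:ℝ) (0:ℝ)).congr_of_eventuallyEq hevent
  have E1 : G (A (1, T'), T') = 0 := hgc.unique hzero
  -- reset equation
  have hR : HasDerivAt (fun ε => xa (ε, T ε) + Δ (xa (ε, T ε), T ε))
      (A (1, T') + DΔ (A (1, T'), T')) 0 := h1.add hΔc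
  have hL : HasDerivAt (fun ε => xp (ε, T ε)) (A (1, T') + DΔ (A (1, T'), T')) 0 :=
    hR.congr_of_eventuallyEq hreset
  have E2 : P (1, T') = A (1, T') + DΔ (A (1, T'), T') := h1p.unique hL
  -- partial derivatives of g
  have hg1 : ∀ v, D1g v = G (v, 0) := by
    intro v
    have hin : HasFDerivAt (fun y : Fin n → ℝ => (y, T 0))
        ((ContinuousLinearMap.id ℝ (Fin n → ℝ)).prod 0) (xa (0, T 0)) :=
      (hasFDerivAt_id _).prodMk (hasFDerivAt_const _ _)
    have h : HasFDerivAt (fun y => g (y, T 0))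
        (G.comp ((ContinuousLinearMap.id ℝ (Fin n → ℝ)).prod 0)) (xa (0, T 0)) :=
      (hgd (xa (0, T 0), T 0)).hasFDerivAt.comp (xa (0, T 0)) hin
    rw [hD1g, h.fderiv]
    simp
  have hg2 : D2g = G (0, 1) := by
    have hin : HasDerivAt (fun s : ℝ => (xa (0, T 0), s)) ((0 : Fin n → ℝ), (1:ℝ)) (T 0) :=
      (hasDerivAt_const _ _).prodMk (hasDerivAt_id _)
    have h : HasDerivAt (fun s => g (xa (0, T 0), s)) (G ((0 : Fin n → ℝ), (1:ℝ))) (T 0) :=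
      (hgd (xa (0, T 0), T 0)).hasFDerivAt.comp_hasDerivAt _ hin
    rw [hD2g, h.deriv]
  have hΔ1 : ∀ v, D1Δ v = DΔ (v, 0) := by
    intro v
    have hin : HasFDerivAt (fun y : Fin n → ℝ => (y, T 0))
        ((ContinuousLinearMap.id ℝ (Fin n → ℝ)).prod 0) (xa (0, T 0)) :=
      (hasFDerivAt_id _).prodMk (hasFDerivAt_const _ _)
    have h : HasFDerivAt (fun y => Δ (y, T 0))
        (DΔ.comp ((ContinuousLinearMap.id ℝ (Fin n → ℝ)).prod 0)) (xa (0, T 0)) :=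
      (hΔd (xa (0, T 0), T 0)).hasFDerivAt.comp (xa (0, T 0)) hin
    rw [hD1Δ, h.fderiv]
    simp
  have hΔ2 : D2Δ = DΔ (0, 1) := by
    have hin : HasDerivAt (fun s : ℝ => (xa (0, T 0), s)) ((0 : Fin n → ℝ), (1:ℝ)) (T 0) :=
      (hasDerivAt_const _ _).prodMk (hasDerivAt_id _)
    have h : HasDerivAt (fun s => Δ (xa (0, T 0), s)) (DΔ ((0 : Fin n → ℝ), (1:ℝ))) (T 0) :=
      (hΔd (xa (0, T 0), T 0)).hasFDerivAt.comp_hasDerivAt _ hin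
    rw [hD2Δ, h.deriv]
  -- splitting lemmas
  have hsplit : ∀ (v : Fin n → ℝ) (s : ℝ), ((v, s) : (Fin n → ℝ) × ℝ)
      = (v, 0) + s • ((0 : Fin n → ℝ), (1:ℝ)) := by
    intro v s; simp [Prod.ext_iff]
  have hGsplit : ∀ (v : Fin n → ℝ) (s : ℝ), G (v, s) = D1g v + s * D2g := by
    intro v s
    rw [hsplit v s, map_add, map_smul, hg1, hg2, smul_eq_mul]
  have hDΔsplit : ∀ (v : Fin n → ℝ) (s : ℝ), DΔ (v, s) = D1Δ v + s • D2Δ := by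
    intro v s
    rw [hsplit v s, map_add, map_smul, hΔ1, hΔ2]
  -- decompose the direction (1, T')
  have hdir : ((1 : ℝ), T') = ((1 : ℝ), (0:ℝ)) + T' • ((0:ℝ), (1:ℝ)) := by
    simp [Prod.ext_iff]
  set za := A (1, 0) with hza
  set zp := P (1, 0) with hzp
  have hAd : A (1, T') = za + T' • fm := by
    rw [hdir, map_add, map_smul, hfm, hza]
  have hPd : P (1, T') = zp + T' • fp := by
    rw [hdir, map_add, map_smul, hfp, hzp]
  -- scalar guard equation
  have E1' : D1g za + T' * gdot = 0 := by
    rw [hgdot]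
    have := E1
    rw [hAd, hGsplit, map_add, map_smul] at this
    simp only [smul_eq_mul] at this
    linarith
  -- vector reset equation
  have E2' : zp + T' • fp = za + T' • fm + (D1Δ za + T' • D1Δ fm + T' • D2Δ) := by
    have := E2
    rw [hAd, hPd, hDΔsplit, map_add, map_smul] at this
    rw [this]
  -- final algebra
  have hc : D1g za = -(T' * gdot) := by linarith
  show zp = za + H za
  rw [hH]
  have hHapp : H za = gdot⁻¹ • ((D1g za) • (fp - fm - Δdot)) + D1Δ za := by
    rw [hH]; simp
  rw [← hH, hHapp, hc, hΔdot]
  have hzp' : zp = za + T' • fm + (D1Δ za + T' • D1Δ fm + T' • D2Δ) - T' • fp :=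
    eq_sub_of_add_eq E2'
  rw [hzp']
  have hsc : gdot⁻¹ • ((-(T' * gdot)) • (fp - fm - (D1Δ fm + D2Δ)))
      = (-T') • (fp - fm - (D1Δ fm + D2Δ)) := by
    rw [smul_smul]
    congr 1
    field_simp
  rw [hsc]
  module
end

section
/- Jump-LQR lower bound via the Riccati equation with jump reset: Let t₀ < τ < T, let Aᵃ, Aᵖ : [t₀,T] → ℝ^{n×n}, Bᵃ, Bᵖ : [t₀,T] → ℝ^{n×m}, Q : [t₀,T] → ℝ^{n×n} symmetric positive definite, R : [t₀,T] → ℝ^{m×m} symmetric positive definite, all continuous, let H ∈ ℝ^{n×n} and let P_T be symmetric. Let Pᵖ : [τ,T] → ℝ^{n×n} be a continuously differentiable symmetric solution of −Ṗᵖ = (Aᵖ)ᵀ Pᵖ + Pᵖ Aᵖ − Pᵖ Bᵖ R⁻¹ (Bᵖ)ᵀ Pᵖ + Q with Pᵖ(T) = P_T, and let Pᵃ : [t₀,τ] → ℝ^{n×n} be a continuously differentiable symmetric solution of −Ṗᵃ = (Aᵃ)ᵀ Pᵃ + Pᵃ Aᵃ − Pᵃ Bᵃ R⁻¹ (Bᵃ)ᵀ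 Pᵃ + Q with terminal condition Pᵃ(τ) = (I + H)ᵀ Pᵖ(τ) (I + H). Let v : [t₀,T] → ℝ^m be continuous and let z satisfy z(t₀) = z₀, ż = Aᵃ z + Bᵃ v on [t₀,τ], the jump z(τ⁺) = (I + H) z(τ⁻) at t = τ, and ż = Aᵖ z + Bᵖ v on [τ,T]. Then ½ ∫_{t₀}^{T} ( z(s)ᵀ Q(s) z(s) + v(s)ᵀ R(s) v(s) ) ds + ½ z(T)ᵀ P_T z(T) ≥ ½ z₀ᵀ Pᵃ(t₀) z₀. -/
open Set Matrix

lemma dotFlip {k l : ℕ} (M : Matrix (Fin k) (Fin l) ℝ) (x : Fin k → ℝ) (y : Fin l → ℝ) :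
    x ⬝ᵥ M *ᵥ y = (Mᵀ *ᵥ x) ⬝ᵥ y := by
  rw [Matrix.dotProduct_mulVec, Matrix.mulVec_transpose]

lemma key_identity (n m : ℕ)
    (A P P' Q : Matrix (Fin n) (Fin n) ℝ) (B : Matrix (Fin n) (Fin m) ℝ)
    (R : Matrix (Fin m) (Fin m) ℝ)
    (hRs : Rᵀ = R) (hPs : Pᵀ = P)
    (hR1 : R * R⁻¹ = 1) (hR2 : R⁻¹ * R = 1)
    (hP' : -P' = Aᵀ * P + P * A - P * B * R⁻¹ * Bᵀ * P + Q)
    (z : Fin n → ℝ) (v : Fin m → ℝ) :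
    (A *ᵥ z + B *ᵥ v) ⬝ᵥ P *ᵥ z + z ⬝ᵥ P' *ᵥ z + z ⬝ᵥ P *ᵥ (A *ᵥ z + B *ᵥ v)
      = (v + (R⁻¹ * Bᵀ * P) *ᵥ z) ⬝ᵥ R *ᵥ (v + (R⁻¹ * Bᵀ * P) *ᵥ z)
        - (z ⬝ᵥ Q *ᵥ z + v ⬝ᵥ R *ᵥ v) := by
  have hP'' : P' = -(Aᵀ * P) - P * A + P * B * R⁻¹ * Bᵀ * P - Q := by
    have := congrArg Neg.neg hP'
    simp only [neg_neg] at this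
    rw [this]; noncomm_ring
  subst hP''
  simp only [Matrix.add_mulVec, Matrix.sub_mulVec, Matrix.neg_mulVec, Matrix.mulVec_add,
    Matrix.mulVec_neg, dotProduct_add, add_dotProduct, dotProduct_sub, sub_dotProduct,
    dotProduct_neg, neg_dotProduct, ← Matrix.mulVec_mulVec]
  simp only [dotFlip, Matrix.transpose_transpose, Matrix.transpose_mul, hPs, hRs,
    Matrix.transpose_nonsing_inv, Matrix.mulVec_mulVec]
  have e1 : R * (R⁻¹ * (Bᵀ * P)) = Bᵀ * P := by rw [← Matrix.mul_assoc, hR1, Matrix.one_mul]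
  have e2 : P * B * R⁻¹ * R = P * B := by rw [Matrix.mul_assoc, hR2, Matrix.mul_one]
  have e3 : P * B * (R⁻¹ * (Bᵀ * P)) = P * B * R⁻¹ * Bᵀ * P := by
    rw [← Matrix.mul_assoc, ← Matrix.mul_assoc]
  ring_nf
  rw [e1, e2, e3]
  ring

lemma contOn_dot {k : ℕ} {x y : ℝ → Fin k → ℝ} {s : Set ℝ}
    (hx : ∀ i, ContinuousOn (fun t => x t i) s)
    (hy : ∀ i, ContinuousOn (fun t => y t i) s) :
    ContinuousOn (fun t => x t ⬝ᵥ y t) s := by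
  simp only [dotProduct]
  exact continuousOn_finset_sum _ fun i _ => (hx i).mul (hy i)

lemma contOn_mulVec {k l : ℕ} {M : ℝ → Matrix (Fin k) (Fin l) ℝ} {x : ℝ → Fin l → ℝ} {s : Set ℝ}
    (hM : ∀ i j, ContinuousOn (fun t => M t i j) s)
    (hx : ∀ j, ContinuousOn (fun t => x t j) s) :
    ∀ i, ContinuousOn (fun t => (M t *ᵥ x t) i) s := by
  intro i
  simp only [Matrix.mulVec, dotProduct]
  exact continuousOn_finset_sum _ fun j _ => (hM i j).mul (hx j)

lemma contOn_matmul {k l o : ℕ} {M : ℝ → Matrix (Fin k) (Fin l) ℝ}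
    {N : ℝ → Matrix (Fin l) (Fin o) ℝ} {s : Set ℝ}
    (hM : ∀ i j, ContinuousOn (fun t => M t i j) s)
    (hN : ∀ i j, ContinuousOn (fun t => N t i j) s) :
    ∀ i j, ContinuousOn (fun t => (M t * N t) i j) s := by
  intro i j
  simp only [Matrix.mul_apply]
  exact continuousOn_finset_sum _ fun l _ => (hM i l).mul (hN l j)

lemma contOn_inv {k : ℕ} {R : ℝ → Matrix (Fin k) (Fin k) ℝ} {s : Set ℝ}
    (hRc : ∀ i j, ContinuousOn (fun t => R t i j) s)
    (hR : ∀ t ∈ s, (R t).PosDef) :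
    ∀ i j, ContinuousOn (fun t => (R t)⁻¹ i j) s := by
  have hRm : ContinuousOn (fun t => R t) s :=
    continuousOn_pi.2 fun i => continuousOn_pi.2 fun j => hRc i j
  have hdet : ContinuousOn (fun t => (R t).det) s :=
    (Continuous.matrix_det continuous_id).comp_continuousOn hRm
  have hdetinv : ContinuousOn (fun t => ((R t).det)⁻¹) s :=
    hdet.inv₀ fun t ht => (hR t ht).det_pos.ne'
  have hadj : ContinuousOn (fun t => (R t).adjugate) s :=
    (Continuous.matrix_adjugate continuous_id).comp_continuousOn hRm
  intro i j
  have hadjij : ContinuousOn (fun t => (R t).adjugate i j) s :=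
    continuousOn_pi.1 (continuousOn_pi.1 hadj i) j
  have h : ∀ t, (R t)⁻¹ i j = ((R t).det)⁻¹ * (R t).adjugate i j := by
    intro t
    rw [Matrix.inv_def, Ring.inverse_eq_inv']
    simp [Matrix.smul_apply]
  simp only [h]
  exact hdetinv.mul hadjij

lemma lqr_interval (n m : ℕ) (a b : ℝ) (hab : a ≤ b)
    (A : ℝ → Matrix (Fin n) (Fin n) ℝ) (B : ℝ → Matrix (Fin n) (Fin m) ℝ)
    (Q : ℝ → Matrix (Fin n) (Fin n) ℝ) (R : ℝ → Matrix (Fin m) (Fin m) ℝ)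
    (hB : ∀ i j, ContinuousOn (fun t => B t i j) (Icc a b))
    (hQc : ∀ i j, ContinuousOn (fun t => Q t i j) (Icc a b))
    (hRc : ∀ i j, ContinuousOn (fun t => R t i j) (Icc a b))
    (hR : ∀ t ∈ Icc a b, (R t).PosDef)
    (P P' : ℝ → Matrix (Fin n) (Fin n) ℝ)
    (hPsym : ∀ t ∈ Icc a b, (P t)ᵀ = P t)
    (hP' : ∀ t ∈ Icc a b, ∀ i j, HasDerivAt (fun s => P s i j) (P' t i j) t)
    (hRic : ∀ t ∈ Icc a b, -P' t = (A t)ᵀ * P t + P t * A t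
        - P t * B t * (R t)⁻¹ * (B t)ᵀ * P t + Q t)
    (z : ℝ → Fin n → ℝ) (v : ℝ → Fin m → ℝ)
    (hv : ContinuousOn v (Icc a b))
    (hz : ∀ t ∈ Icc a b, HasDerivAt z ((A t) *ᵥ (z t) + (B t) *ᵥ (v t)) t) :
    z a ⬝ᵥ (P a) *ᵥ (z a) ≤
      (∫ s in a..b, (z s ⬝ᵥ (Q s) *ᵥ (z s) + v s ⬝ᵥ (R s) *ᵥ (v s)))
        + z b ⬝ᵥ (P b) *ᵥ (z b) := by
  have hRs : ∀ t ∈ Icc a b, (R t)ᵀ = R t := fun t ht => by simpa [Matrix.IsSymm] using (hR t ht).1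
  have hRdet : ∀ t ∈ Icc a b, IsUnit (R t).det := fun t ht =>
    isUnit_iff_ne_zero.2 (hR t ht).det_pos.ne'
  set K : ℝ → Matrix (Fin m) (Fin n) ℝ := fun t => (R t)⁻¹ * (B t)ᵀ * P t with hK
  set f : ℝ → ℝ := fun t => z t ⬝ᵥ (Q t) *ᵥ (z t) + v t ⬝ᵥ (R t) *ᵥ (v t) with hf
  set g : ℝ → ℝ := fun t => (v t + K t *ᵥ z t) ⬝ᵥ (R t) *ᵥ (v t + K t *ᵥ z t) with hg
  set W : ℝ → ℝ := fun t => z t ⬝ᵥ (P t) *ᵥ (z t) with hWdef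
  -- derivative of W
  have hW : ∀ t ∈ Icc a b, HasDerivAt W (g t - f t) t := by
    intro t ht
    have hzi := hasDerivAt_pi.mp (hz t ht)
    have hD : HasDerivAt (fun s => ∑ i, ∑ j, z s i * (P s i j * z s j))
        (∑ i, ∑ j, ((A t *ᵥ z t + B t *ᵥ v t) i * (P t i j * z t j)
          + z t i * (P' t i j * z t j + P t i j * (A t *ᵥ z t + B t *ᵥ v t) j))) t :=
      HasDerivAt.fun_sum fun i _ => HasDerivAt.fun_sum fun j _ =>
        (hzi i).mul ((hP' t ht i j).mul (hzi j))
    have hWfun : W = fun s => ∑ i, ∑ j, z s i * (P s i j * z s j) := by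
      funext s
      simp [hWdef, dotProduct, Matrix.mulVec, Finset.mul_sum]
    rw [hWfun]
    convert hD using 1
    have hEq : (∑ i, ∑ j, ((A t *ᵥ z t + B t *ᵥ v t) i * (P t i j * z t j)
          + z t i * (P' t i j * z t j + P t i j * (A t *ᵥ z t + B t *ᵥ v t) j)))
        = (A t *ᵥ z t + B t *ᵥ v t) ⬝ᵥ P t *ᵥ z t + z t ⬝ᵥ P' t *ᵥ z t
          + z t ⬝ᵥ P t *ᵥ (A t *ᵥ z t + B t *ᵥ v t) := by
      simp only [dotProduct, Matrix.mulVec, Finset.mul_sum, Finset.sum_add_distrib,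
        ← Finset.sum_add_distrib]
      exact Finset.sum_congr rfl fun i _ => Finset.sum_congr rfl fun j _ => by ring
    rw [hEq, key_identity n m (A t) (P t) (P' t) (Q t) (B t) (R t) (hRs t ht) (hPsym t ht)
      (Matrix.mul_nonsing_inv _ (hRdet t ht)) (Matrix.nonsing_inv_mul _ (hRdet t ht))
      (hRic t ht) (z t) (v t)]
  -- continuity
  have hzc : ∀ i, ContinuousOn (fun t => z t i) (Icc a b) := fun i t ht =>
    ((hasDerivAt_pi.mp (hz t ht) i).continuousAt).continuousWithinAt
  have hvc : ∀ i, ContinuousOn (fun t => v t i) (Icc a b) := fun i => continuousOn_pi.1 hv i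
  have hPc : ∀ i j, ContinuousOn (fun t => P t i j) (Icc a b) := fun i j t ht =>
    ((hP' t ht i j).continuousAt).continuousWithinAt
  have hRinvc := contOn_inv hRc hR
  have hBtc : ∀ i j, ContinuousOn (fun t => (B t)ᵀ i j) (Icc a b) := fun i j => hB j i
  have hKc : ∀ i j, ContinuousOn (fun t => K t i j) (Icc a b) :=
    contOn_matmul (contOn_matmul hRinvc hBtc) hPc
  have huc : ∀ i, ContinuousOn (fun t => (v t + K t *ᵥ z t) i) (Icc a b) := by
    intro i
    exact ((hvc i).add (contOn_mulVec hKc hzc i))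
  have hgc : ContinuousOn g (Icc a b) := contOn_dot huc (contOn_mulVec hRc huc)
  have hfc : ContinuousOn f (Icc a b) :=
    (contOn_dot hzc (contOn_mulVec hQc hzc)).add (contOn_dot hvc (contOn_mulVec hRc hvc))
  have huIcc : uIcc a b = Icc a b := uIcc_of_le hab
  have hfint : IntervalIntegrable f MeasureTheory.volume a b :=
    ContinuousOn.intervalIntegrable (huIcc ▸ hfc)
  have hgint : IntervalIntegrable g MeasureTheory.volume a b :=
    ContinuousOn.intervalIntegrable (huIcc ▸ hgc)
  have hftc : (∫ t in a..b, (g t - f t)) = W b - W a :=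
    intervalIntegral.integral_eq_sub_of_hasDerivAt
      (fun t ht => hW t (huIcc ▸ ht)) (hgint.sub hfint)
  have hsplit : (∫ t in a..b, (g t - f t)) = (∫ t in a..b, g t) - ∫ t in a..b, f t :=
    intervalIntegral.integral_sub hgint hfint
  have hnonneg : 0 ≤ ∫ t in a..b, g t := by
    apply intervalIntegral.integral_nonneg hab
    intro u hu
    have := (hR u hu).posSemidef.dotProduct_mulVec_nonneg (v u + K u *ᵥ z u)
    simpa [hg] using this
  have : (∫ t in a..b, g t) - (∫ t in a..b, f t) = W b - W a := by rw [← hsplit, hftc]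
  have hgoal : W a ≤ (∫ t in a..b, f t) + W b := by linarith
  simpa [hWdef, hf] using hgoal

/-- Jump-LQR lower bound via the Riccati equation with jump reset: for the
jump linear dynamics `ż = Aᵃz + Bᵃv` on `[t₀,τ]`, `z⁺ = (I + H) z⁻` at `τ`,
`ż = Aᵖz + Bᵖv` on `[τ,T]` (trajectory represented by its ante- and post-event
pieces `za` and `zp`), the cost of any continuous control is bounded below by
`½ z₀ᵀ Pᵃ(t₀) z₀`, where `Pᵖ`, `Pᵃ` solve the respective Riccati equations with
`Pᵖ(T) = P_T` and the reset `Pᵃ(τ) = (I + H)ᵀ Pᵖ(τ) (I + H)`. -/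
theorem jump_lqr_lower_bound
    (n m : ℕ) (t₀ τ tf : ℝ) (h0τ : t₀ < τ) (hτf : τ < tf)
    (Aa Ap Q : ℝ → Matrix (Fin n) (Fin n) ℝ)
    (Ba Bp : ℝ → Matrix (Fin n) (Fin m) ℝ)
    (R : ℝ → Matrix (Fin m) (Fin m) ℝ)
    (H P_T : Matrix (Fin n) (Fin n) ℝ) (hPT : P_Tᵀ = P_T)
    (hAa : ∀ i j, ContinuousOn (fun t => Aa t i j) (Icc t₀ tf))
    (hAp : ∀ i j, ContinuousOn (fun t => Ap t i j) (Icc t₀ tf))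
    (hBa : ∀ i j, ContinuousOn (fun t => Ba t i j) (Icc t₀ tf))
    (hBp : ∀ i j, ContinuousOn (fun t => Bp t i j) (Icc t₀ tf))
    (hQc : ∀ i j, ContinuousOn (fun t => Q t i j) (Icc t₀ tf))
    (hRc : ∀ i j, ContinuousOn (fun t => R t i j) (Icc t₀ tf))
    (hQ : ∀ t ∈ Icc t₀ tf, (Q t).PosDef)
    (hR : ∀ t ∈ Icc t₀ tf, (R t).PosDef)
    -- Riccati solution on the post-event interval [τ, T]
    (Pp Pp' : ℝ → Matrix (Fin n) (Fin n) ℝ)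
    (hPpsym : ∀ t ∈ Icc τ tf, (Pp t)ᵀ = Pp t)
    (hPp' : ∀ t ∈ Icc τ tf, ∀ i j, HasDerivAt (fun s => Pp s i j) (Pp' t i j) t)
    (hRicp : ∀ t ∈ Icc τ tf,
      -Pp' t = (Ap t)ᵀ * Pp t + Pp t * Ap t
        - Pp t * Bp t * (R t)⁻¹ * (Bp t)ᵀ * Pp t + Q t)
    (hPpT : Pp tf = P_T)
    -- Riccati solution on the ante-event interval [t₀, τ], with jump reset
    (Pa Pa' : ℝ → Matrix (Fin n) (Fin n) ℝ)
    (hPasym : ∀ t ∈ Icc t₀ τ, (Pa t)ᵀ = Pa t)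
    (hPa' : ∀ t ∈ Icc t₀ τ, ∀ i j, HasDerivAt (fun s => Pa s i j) (Pa' t i j) t)
    (hRica : ∀ t ∈ Icc t₀ τ,
      -Pa' t = (Aa t)ᵀ * Pa t + Pa t * Aa t
        - Pa t * Ba t * (R t)⁻¹ * (Ba t)ᵀ * Pa t + Q t)
    (hPaτ : Pa τ = (1 + H)ᵀ * Pp τ * (1 + H))
    -- the control and the corresponding jumping trajectory
    (z₀ : Fin n → ℝ) (za zp : ℝ → Fin n → ℝ) (v : ℝ → Fin m → ℝ)
    (hv : ContinuousOn v (Icc t₀ tf))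
    (hz0 : za t₀ = z₀)
    (hza : ∀ t ∈ Icc t₀ τ,
      HasDerivAt za ((Aa t).mulVec (za t) + (Ba t).mulVec (v t)) t)
    (hjump : zp τ = (1 + H).mulVec (za τ))
    (hzp : ∀ t ∈ Icc τ tf,
      HasDerivAt zp ((Ap t).mulVec (zp t) + (Bp t).mulVec (v t)) t) :
    (1 / 2) *
        ((∫ s in t₀..τ, (za s ⬝ᵥ (Q s).mulVec (za s) + v s ⬝ᵥ (R s).mulVec (v s)))
          + ∫ s in τ..tf, (zp s ⬝ᵥ (Q s).mulVec (zp s) + v s ⬝ᵥ (R s).mulVec (v s)))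
        + (1 / 2) * (zp tf ⬝ᵥ P_T.mulVec (zp tf))
      ≥ (1 / 2) * (z₀ ⬝ᵥ (Pa t₀).mulVec z₀) := by
  have hsub1 : Icc t₀ τ ⊆ Icc t₀ tf := Icc_subset_Icc le_rfl hτf.le
  have hsub2 : Icc τ tf ⊆ Icc t₀ tf := Icc_subset_Icc h0τ.le le_rfl
  have h_ante := lqr_interval n m t₀ τ h0τ.le Aa Ba Q R
    (fun i j => (hBa i j).mono hsub1) (fun i j => (hQc i j).mono hsub1)
    (fun i j => (hRc i j).mono hsub1) (fun t ht => hR t (hsub1 ht))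
    Pa Pa' hPasym hPa' hRica za v (hv.mono hsub1) hza
  have h_post := lqr_interval n m τ tf hτf.le Ap Bp Q R
    (fun i j => (hBp i j).mono hsub2) (fun i j => (hQc i j).mono hsub2)
    (fun i j => (hRc i j).mono hsub2) (fun t ht => hR t (hsub2 ht))
    Pp Pp' hPpsym hPp' hRicp zp v (hv.mono hsub2) hzp
  have hjumpEq : za τ ⬝ᵥ (Pa τ) *ᵥ (za τ) = zp τ ⬝ᵥ (Pp τ) *ᵥ (zp τ) := by
    rw [hPaτ, hjump]
    rw [show (1 + H)ᵀ * Pp τ * (1 + H) = (1 + H)ᵀ * (Pp τ * (1 + H)) from Matrix.mul_assoc _ _ _]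
    rw [← Matrix.mulVec_mulVec, dotFlip, Matrix.transpose_transpose, ← Matrix.mulVec_mulVec]
  rw [hPpT] at h_post
  rw [hz0] at h_ante
  rw [ge_iff_le]
  have := hjumpEq ▸ h_ante
  linarith
end
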